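/- Let (δ_1, …, δ_r) be the dual basis of the ordered basis B with respect to the trace form and δ = δ_1 + … + δ_r. Suppose f(X) = δ^{−1}(g(X)^p − g(X) + c) for some g(X) ∈ F_q[X] and c ∈ F_q. Then T(f(ξ + α)) = Tr(c) for all ξ, α ∈ F_q; consequently, for any s with 1 ≤ s ≤ q, any subset A ⊆ F_q of size s, and any vector (c_1, …, c_s) ∈ F_p^s with c_1 ≠ Tr(c), the set T((c_1,…,c_s), A, f) is empty. -/

import Mathlib

open Polynomial

/-- The Thue–Morse (sum-of-digits) function on `F` with respect to the ordered
basis `B` of `F` over `F_p`. -/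
noncomputable def TM {p r : ℕ} {F : Type*} [Field F] [Algebra (ZMod p) F]
    (B : Module.Basis (Fin r) (ZMod p) F) (ξ : F) : ZMod p :=
  ∑ i, B.repr ξ i

/-- The set `T(c, A, f)` where `A = {α 1, …, α s}` and `c = (c 1, …, c s)`. -/
noncomputable def TSet {p r s : ℕ} {F : Type*} [Field F] [Algebra (ZMod p) F]
    (B : Module.Basis (Fin r) (ZMod p) F) (c : Fin s → ZMod p) (α : Fin s → F)
    (f : Polynomial F) : Set F :=
  {ξ : F | ∀ i, TM B (f.eval (ξ + α i)) = c i}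

section Aux
variable {p r : ℕ} [Fact p.Prime] {F : Type*} [Field F] [Fintype F] [Algebra (ZMod p) F]

lemma aux_trace_pow (x : F) :
    Algebra.trace (ZMod p) F (x ^ p) = Algebra.trace (ZMod p) F x := by
  haveI : CharP F p := charP_of_injective_algebraMap (algebraMap (ZMod p) F).injective p
  haveI : ExpChar F p := ExpChar.prime (Fact.out)
  let e : F ≃ₐ[ZMod p] F :=
    { frobeniusEquiv F p with
      commutes' := fun a => by
        show frobenius F p _ = _
        rw [frobenius_def, ← map_pow, ZMod.pow_card] }
  have := Algebra.trace_eq_of_algEquiv e x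
  simpa [e, frobeniusEquiv_def, frobenius_def] using this

lemma aux_repr (B : Module.Basis (Fin r) (ZMod p) F) (δ : Fin r → F)
    (hdual : ∀ i j, Algebra.trace (ZMod p) F (δ i * B j) = if i = j then 1 else 0)
    (x : F) (i : Fin r) :
    B.repr x i = Algebra.trace (ZMod p) F (δ i * x) := by
  conv_rhs => rw [← B.sum_repr x]
  rw [Finset.mul_sum, map_sum]
  simp only [Algebra.mul_smul_comm, map_smul, hdual, smul_eq_mul, mul_ite, mul_one, mul_zero]
  simp

lemma aux_TM (B : Module.Basis (Fin r) (ZMod p) F) (δ : Fin r → F)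
    (hdual : ∀ i j, Algebra.trace (ZMod p) F (δ i * B j) = if i = j then 1 else 0)
    (x : F) :
    TM B x = Algebra.trace (ZMod p) F ((∑ i, δ i) * x) := by
  rw [TM, Finset.sum_mul, map_sum]
  exact Finset.sum_congr rfl fun i _ => aux_repr B δ hdual x i

end Aux

theorem stmt16 {p r : ℕ} [Fact p.Prime] (hr : 0 < r)
    {F : Type*} [Field F] [Fintype F] [Algebra (ZMod p) F]
    (hF : Fintype.card F = p ^ r) (B : Module.Basis (Fin r) (ZMod p) F)
    (δ : Fin r → F)
    (hdual : ∀ i j, Algebra.trace (ZMod p) F (δ i * B j) = if i = j then 1 else 0)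
    (g : Polynomial F) (c : F) (f : Polynomial F)
    (hf : f = Polynomial.C (∑ i, δ i)⁻¹ * (g ^ p - g + Polynomial.C c)) :
    (∀ ξ α : F, TM B (f.eval (ξ + α)) = Algebra.trace (ZMod p) F c) ∧
      ∀ (s : ℕ) (hs1 : 1 ≤ s), s ≤ p ^ r →
        ∀ α : Fin s → F, Function.Injective α →
          ∀ cs : Fin s → ZMod p, cs ⟨0, hs1⟩ ≠ Algebra.trace (ZMod p) F c →
            TSet B cs α f = ∅ := by
  have hδ : (∑ i, δ i) ≠ 0 := by
    intro h
    have h1 : Algebra.trace (ZMod p) F ((∑ i, δ i) * B ⟨0, hr⟩) = 1 := by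
      rw [Finset.sum_mul, map_sum]
      simp [hdual]
    rw [h, zero_mul, map_zero] at h1
    exact zero_ne_one h1
  have key : ∀ ξ α : F, TM B (f.eval (ξ + α)) = Algebra.trace (ZMod p) F c := by
    intro ξ α
    set y := ξ + α
    set a := g.eval y
    have hev : f.eval y = (∑ i, δ i)⁻¹ * (a ^ p - a + c) := by
      simp [hf, a]
    rw [hev, aux_TM B δ hdual, ← mul_assoc, mul_inv_cancel₀ hδ, one_mul,
      map_add, map_sub, aux_trace_pow]
    ring
  refine ⟨key, fun s hs1 _ α _ cs hcs => ?_⟩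
  rw [Set.eq_empty_iff_forall_notMem]
  intro ξ hξ
  exact hcs ((hξ ⟨0, hs1⟩).symm.trans (key ξ (α ⟨0, hs1⟩)))
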